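/- arXiv:1112.1129 — 6 statements merged into one kernel-verified Lean document; each statement's English description precedes it below -/
import Mathlib

section
/- Let X₀ = D(c₀, r₀) and X₁ = D(c₁, r₁) be properly overlapping disks (|c₀ − c₁| < r₀ + r₁) with positive radii. Define c_{1/2} = (c₁r₀ + c₀r₁)/(r₀ + r₁) and r_{1/2} = √(r₀r₁)·√((r₀+r₁)² − |c₀−c₁|²)/(r₀ + r₁). Then every point p lying in the intersection X₀ ∩ X₁ satisfies |p − c_{1/2}| ≤ r_{1/2}. -/
/-- The midpoint disk of two properly overlapping disks contains their
intersection: every p ∈ X₀ ∩ X₁ satisfies |p − c_{1/2}| ≤ r_{1/2}. -/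
theorem midpoint_disk_contains_intersection (c₀ c₁ : ℂ) (r₀ r₁ : ℝ)
    (h₀ : 0 < r₀) (h₁ : 0 < r₁) (hover : dist c₀ c₁ < r₀ + r₁) (p : ℂ)
    (hp : p ∈ Metric.closedBall c₀ r₀ ∩ Metric.closedBall c₁ r₁) :
    dist p ((c₁ * (r₀ : ℂ) + c₀ * (r₁ : ℂ)) / (((r₀ : ℝ) + r₁ : ℝ) : ℂ)) ≤
      Real.sqrt (r₀ * r₁) * Real.sqrt ((r₀ + r₁) ^ 2 - dist c₀ c₁ ^ 2) / (r₀ + r₁) := by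
  obtain ⟨hp0, hp1⟩ := hp
  rw [Metric.mem_closedBall] at hp0 hp1
  have hs : (0:ℝ) < r₀ + r₁ := by linarith
  have hsC : (((r₀ : ℝ) + r₁ : ℝ) : ℂ) ≠ 0 := by
    exact_mod_cast (ne_of_gt hs)
  have key : p - (c₁ * (r₀ : ℂ) + c₀ * (r₁ : ℂ)) / (((r₀ : ℝ) + r₁ : ℝ) : ℂ)
      = ((r₀ : ℂ) * (p - c₁) + (r₁ : ℂ) * (p - c₀)) / (((r₀ : ℝ) + r₁ : ℝ) : ℂ) := by
    rw [eq_div_iff hsC, sub_mul, div_mul_cancel₀ _ hsC]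
    push_cast
    ring
  rw [dist_eq_norm, key]
  rw [norm_div, Complex.norm_real, Real.norm_of_nonneg hs.le]
  rw [div_le_div_iff_of_pos_right hs]
  rw [← Real.sqrt_mul (by positivity)]
  have hd2 : dist c₀ c₁ ^ 2 ≤ (r₀ + r₁) ^ 2 := by
    nlinarith [dist_nonneg (x := c₀) (y := c₁)]
  rw [Real.le_sqrt (norm_nonneg _)]
  have ha : ‖p - c₀‖ ^ 2 ≤ r₀ ^ 2 := by
    rw [dist_eq_norm] at hp0; nlinarith [norm_nonneg (p - c₀)]
  have hb : ‖p - c₁‖ ^ 2 ≤ r₁ ^ 2 := by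
    rw [dist_eq_norm] at hp1; nlinarith [norm_nonneg (p - c₁)]
  have hId : ∀ z : ℂ, ‖z‖ ^ 2 = z.re ^ 2 + z.im ^ 2 := by
    intro z
    simp [Complex.sq_norm, Complex.normSq_apply]; ring
  rw [Complex.dist_eq] at *
  simp only [hId] at *
  simp only [Complex.add_re, Complex.add_im, Complex.mul_re, Complex.mul_im,
    Complex.sub_re, Complex.sub_im, Complex.ofReal_re, Complex.ofReal_im] at *
  · nlinarith [ha, hb, mul_pos h₀ h₁, mul_nonneg (mul_nonneg h₀.le hs.le) (sub_nonneg.2 hb),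
      mul_nonneg (mul_nonneg h₁.le hs.le) (sub_nonneg.2 ha)]
  · nlinarith [mul_pos h₀ h₁, hd2]
end

section
/- Let X₀ ⊆ Y₀ and X₁ ⊆ Y₁ be disks such that X₀, X₁ properly overlap and Y₀, Y₁ properly overlap, with X_i and Y_i concentric for i = 0,1 (c_{X_i} = c_{Y_i}). Then the midpoint disks satisfy n(X_{1/2}, Y_{1/2}) ≥ min{n(X₀,Y₀), n(X₁,Y₁)}, where X_{1/2} denotes the midpoint disk of X₀, X₁ (center (c₁r_{X_0}+c₀r_{X_1})/(r_{X_0}+r_{X_1}), radius √(r_{X_0}r_{X_1})√((r_{X_0}+r_{X_1})²−|c₀−c₁|²)/(r_{X_0}+r_{X_1})), and n is the nesting distance. -/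
/-- Center of the midpoint disk of two properly overlapping disks. -/
noncomputable def midC (c₀ c₁ : ℂ) (r₀ r₁ : ℝ) : ℂ :=
  (c₁ * (r₀ : ℂ) + c₀ * (r₁ : ℂ)) / (((r₀ : ℝ) + r₁ : ℝ) : ℂ)

/-- Radius of the midpoint disk of two properly overlapping disks. -/
noncomputable def midR (c₀ c₁ : ℂ) (r₀ r₁ : ℝ) : ℝ :=
  Real.sqrt (r₀ * r₁) * Real.sqrt ((r₀ + r₁) ^ 2 - dist c₀ c₁ ^ 2) / (r₀ + r₁)

/-- The nesting distance n(X,Y) = r_Y − r_X − |c_X − c_Y|. -/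
noncomputable def nest (cX : ℂ) (rX : ℝ) (cY : ℂ) (rY : ℝ) : ℝ :=
  rY - rX - dist cX cY


lemma le_of_sq_le_sq' (x y : ℝ) (hx : 0 ≤ x) (hy : 0 ≤ y) (h : x^2 ≤ y^2) : x ≤ y := by
  nlinarith

lemma two_mul_sqrt_le (a₀ a₁ d : ℝ) (h₀ : 0 < a₀) (h₁ : 0 < a₁) (hd : 0 ≤ d)
    (hds : d ≤ a₀ + a₁) :
    2 * (Real.sqrt (a₀*a₁) * Real.sqrt ((a₀+a₁)^2 - d^2)) ≤ (a₀+a₁)^2 - |a₀ - a₁| * d := by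
  have hsq : (Real.sqrt (a₀*a₁) * Real.sqrt ((a₀+a₁)^2 - d^2))^2
      = a₀*a₁*((a₀+a₁)^2 - d^2) := by
    rw [mul_pow, Real.sq_sqrt (by positivity), Real.sq_sqrt (by nlinarith)]
  have he : |a₀ - a₁| ≤ a₀ + a₁ := abs_le.2 ⟨by linarith, by linarith⟩
  have he2 : |a₀ - a₁| ^ 2 = (a₀-a₁)^2 := sq_abs _
  have habs : 0 ≤ |a₀ - a₁| := abs_nonneg _
  have hrhs : 0 ≤ (a₀+a₁)^2 - |a₀ - a₁| * d := by nlinarith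
  apply le_of_sq_le_sq' _ _ (by positivity) hrhs
  nlinarith [hsq, he2, sq_nonneg ((a₀+a₁)*(|a₀ - a₁| - d))]

lemma lemA (d a₀ a₁ c₀ c₁ : ℝ) (ha₀ : 0 < a₀) (ha₁ : 0 < a₁) (hd : 0 ≤ d)
    (hc₀ : a₀ ≤ c₀) (hc₁ : a₁ ≤ c₁) (hov : d < a₀ + a₁) :
    d * |a₀*c₁ - a₁*c₀| / ((a₀+a₁)*(c₀+c₁))
      + Real.sqrt (a₀*a₁) * Real.sqrt ((a₀+a₁)^2 - d^2) / (a₀+a₁)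
      ≤ Real.sqrt (c₀*c₁) * Real.sqrt ((c₀+c₁)^2 - d^2) / (c₀+c₁) := by
  have hc₀' : 0 < c₀ := lt_of_lt_of_le ha₀ hc₀
  have hc₁' : 0 < c₁ := lt_of_lt_of_le ha₁ hc₁
  have hsa : (0:ℝ) < a₀ + a₁ := by linarith
  have hsc : (0:ℝ) < c₀ + c₁ := by linarith
  have hdsc : d ≤ c₀ + c₁ := by linarith
  set u := Real.sqrt (a₀*a₁) * Real.sqrt ((a₀+a₁)^2 - d^2) with hu
  set v := Real.sqrt (c₀*c₁) * Real.sqrt ((c₀+c₁)^2 - d^2) with hv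
  set K := |a₀*c₁ - a₁*c₀| with hKdef
  have hu0 : 0 ≤ u := by rw [hu]; positivity
  have hv0 : 0 ≤ v := by rw [hv]; positivity
  have hK0 : 0 ≤ K := abs_nonneg _
  have hE0 : 0 ≤ |a₀ - a₁| := abs_nonneg _
  have hu2 : u^2 = a₀*a₁*((a₀+a₁)^2 - d^2) := by
    rw [hu, mul_pow, Real.sq_sqrt (by positivity), Real.sq_sqrt (by nlinarith)]
  have hv2 : v^2 = c₀*c₁*((c₀+c₁)^2 - d^2) := by
    rw [hv, mul_pow, Real.sq_sqrt (by positivity), Real.sq_sqrt (by nlinarith)]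
  have hK2 : K^2 = (a₀*c₁ - a₁*c₀)^2 := sq_abs _
  have h2u : 2*u ≤ (a₀+a₁)^2 - |a₀ - a₁| * d := two_mul_sqrt_le a₀ a₁ d ha₀ ha₁ hd (le_of_lt hov)
  have habsk : (a₀*c₁ - a₁*c₀)*(a₀-a₁) ≤ K * |a₀ - a₁| := by
    calc (a₀*c₁ - a₁*c₀)*(a₀-a₁) ≤ |(a₀*c₁ - a₁*c₀)*(a₀-a₁)| := le_abs_self _
    _ = K * |a₀ - a₁| := abs_mul _ _
  have hKle : K ≤ c₀*c₁ - a₀*a₁ := abs_le.2 ⟨by nlinarith, by nlinarith⟩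
  have key : d*K + u*(c₀+c₁) ≤ v*(a₀+a₁) := by
    apply le_of_sq_le_sq' _ _
      (by apply add_nonneg (mul_nonneg hd hK0) (mul_nonneg hu0 hsc.le))
      (mul_nonneg hv0 hsa.le)
    have p1 : (a₀+a₁)^2*((c₀+c₁)^2)*K ≤ (a₀+a₁)^2*((c₀+c₁)^2)*(c₀*c₁ - a₀*a₁) :=
      mul_le_mul_of_nonneg_left hKle (by positivity)
    have p2 : d^2*(c₀+c₁)*((a₀*c₁ - a₁*c₀)*(a₀-a₁)) ≤ d^2*(c₀+c₁)*(K * |a₀ - a₁|) :=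
      mul_le_mul_of_nonneg_left habsk (mul_nonneg (sq_nonneg d) hsc.le)
    have p3 : (d*K*(c₀+c₁))*(2*u) ≤ (d*K*(c₀+c₁))*((a₀+a₁)^2 - |a₀ - a₁| * d) :=
      mul_le_mul_of_nonneg_left h2u
        (mul_nonneg (mul_nonneg hd hK0) hsc.le)
    have p4 : 0 ≤ K*(c₀+c₁)*(a₀+a₁)^2*((c₀+c₁)-d) := by
      apply mul_nonneg (mul_nonneg (mul_nonneg hK0 hsc.le) (sq_nonneg _)) (by linarith)
    have hiden : (v*(a₀+a₁))^2 - (d*K + u*(c₀+c₁))^2 =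
        ((a₀+a₁)^2*((c₀+c₁)^2)*(c₀*c₁ - a₀*a₁) - (a₀+a₁)^2*((c₀+c₁)^2)*K)
      + (d^2*(c₀+c₁)*(K * |a₀ - a₁|) - d^2*(c₀+c₁)*((a₀*c₁ - a₁*c₀)*(a₀-a₁)))
      + ((d*K*(c₀+c₁))*((a₀+a₁)^2 - |a₀ - a₁| * d) - (d*K*(c₀+c₁))*(2*u))
      + K*(c₀+c₁)*(a₀+a₁)^2*((c₀+c₁)-d) := by
      linear_combination (a₀+a₁)^2 * hv2 - (c₀+c₁)^2 * hu2 - d^2 * hK2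
    linarith [p1, p2, p3, p4, hiden]
  have heq1 : d*K/((a₀+a₁)*(c₀+c₁)) + u/(a₀+a₁) = (d*K + u*(c₀+c₁))/((a₀+a₁)*(c₀+c₁)) := by
    field_simp
  have heq2 : v/(c₀+c₁) = v*(a₀+a₁)/((a₀+a₁)*(c₀+c₁)) := by
    field_simp
  rw [heq1, heq2]
  exact (div_le_div_iff_of_pos_right (by positivity)).2 key
lemma lemB (d c₀ c₁ m : ℝ) (hc₀ : 0 < c₀) (hc₁ : 0 < c₁) (hd : 0 ≤ d) (hm : 0 ≤ m)
    (hov : d < c₀ + c₁) :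
    m + d * (m * |c₀ - c₁|) / ((c₀+c₁)*((c₀+m)+(c₁+m)))
      + Real.sqrt (c₀*c₁) * Real.sqrt ((c₀+c₁)^2 - d^2) / (c₀+c₁)
      ≤ Real.sqrt ((c₀+m)*(c₁+m)) * Real.sqrt (((c₀+m)+(c₁+m))^2 - d^2) / ((c₀+m)+(c₁+m)) := by
  have hsc : (0:ℝ) < c₀ + c₁ := by linarith
  have hsb : (0:ℝ) < (c₀+m) + (c₁+m) := by linarith
  have hdsb : d ≤ (c₀+m) + (c₁+m) := by linarith
  set w := Real.sqrt (c₀*c₁) * Real.sqrt ((c₀+c₁)^2 - d^2) with hw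
  set v := Real.sqrt ((c₀+m)*(c₁+m)) * Real.sqrt (((c₀+m)+(c₁+m))^2 - d^2) with hv
  set E := |c₀ - c₁| with hEdef
  have hw0 : 0 ≤ w := by rw [hw]; positivity
  have hv0 : 0 ≤ v := by rw [hv]; positivity
  have hE0 : 0 ≤ E := abs_nonneg _
  have hw2 : w^2 = c₀*c₁*((c₀+c₁)^2 - d^2) := by
    rw [hw, mul_pow, Real.sq_sqrt (by positivity), Real.sq_sqrt (by nlinarith)]
  have hv2 : v^2 = (c₀+m)*(c₁+m)*(((c₀+m)+(c₁+m))^2 - d^2) := by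
    rw [hv, mul_pow, Real.sq_sqrt (by positivity), Real.sq_sqrt (by nlinarith)]
  have hE2 : E^2 = (c₀-c₁)^2 := sq_abs _
  have h2w : 2*w ≤ (c₀+c₁)^2 - E * d := two_mul_sqrt_le c₀ c₁ d hc₀ hc₁ hd (le_of_lt hov)
  have key : m*((c₀+c₁)*((c₀+m)+(c₁+m))) + d*(m*E) + w*((c₀+m)+(c₁+m))
      ≤ v*(c₀+c₁) := by
    apply le_of_sq_le_sq' _ _
      (by
        apply add_nonneg (add_nonneg (mul_nonneg hm (by positivity))
          (mul_nonneg hd (mul_nonneg hm hE0))) (mul_nonneg hw0 hsb.le))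
      (mul_nonneg hv0 hsc.le)
    have q1 : (m*((c₀+m)+(c₁+m))*((c₀+c₁)*((c₀+m)+(c₁+m)) + d*E))*(2*w)
        ≤ (m*((c₀+m)+(c₁+m))*((c₀+c₁)*((c₀+m)+(c₁+m)) + d*E))*((c₀+c₁)^2 - E * d) := by
      apply mul_le_mul_of_nonneg_left h2w
      apply mul_nonneg (mul_nonneg hm hsb.le)
      apply add_nonneg (mul_nonneg hsc.le hsb.le) (mul_nonneg hd hE0)
    have hiden : (v*(c₀+c₁))^2 - (m*((c₀+c₁)*((c₀+m)+(c₁+m))) + d*(m*E) + w*((c₀+m)+(c₁+m)))^2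
        = (m*((c₀+m)+(c₁+m))*((c₀+c₁)*((c₀+m)+(c₁+m)) + d*E))*((c₀+c₁)^2 - E * d)
          - (m*((c₀+m)+(c₁+m))*((c₀+c₁)*((c₀+m)+(c₁+m)) + d*E))*(2*w) := by
      linear_combination (c₀+c₁)^2 * hv2 - ((c₀+m)+(c₁+m))^2 * hw2 - (d^2*m^2 - d^2*m*(c₀+c₁+2*m)) * hE2
    linarith [q1, hiden]
  have heq1 : m + d*(m*E)/((c₀+c₁)*((c₀+m)+(c₁+m))) + w/(c₀+c₁)
      = (m*((c₀+c₁)*((c₀+m)+(c₁+m))) + d*(m*E) + w*((c₀+m)+(c₁+m)))/((c₀+c₁)*((c₀+m)+(c₁+m))) := by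
    field_simp
  have heq2 : v/((c₀+m)+(c₁+m)) = v*(c₀+c₁)/((c₀+c₁)*((c₀+m)+(c₁+m))) := by
    field_simp
  rw [heq1, heq2]
  exact (div_le_div_iff_of_pos_right (by positivity)).2 key
lemma master (d a₀ a₁ b₀ b₁ m : ℝ) (ha₀ : 0 < a₀) (ha₁ : 0 < a₁) (hd : 0 ≤ d) (hm : 0 ≤ m)
    (hb₀ : a₀ + m ≤ b₀) (hb₁ : a₁ + m ≤ b₁) (hov : d < a₀ + a₁) :
    m + d * |a₀*b₁ - a₁*b₀| / ((a₀+a₁)*(b₀+b₁))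
      + Real.sqrt (a₀*a₁) * Real.sqrt ((a₀+a₁)^2 - d^2) / (a₀+a₁)
      ≤ Real.sqrt (b₀*b₁) * Real.sqrt ((b₀+b₁)^2 - d^2) / (b₀+b₁) := by
  have hA := lemA d a₀ a₁ (b₀ - m) (b₁ - m) ha₀ ha₁ hd (by linarith) (by linarith) hov
  have hB := lemB d (b₀ - m) (b₁ - m) m (by linarith) (by linarith) hd hm (by linarith)
  rw [show b₀ - m + m = b₀ by ring, show b₁ - m + m = b₁ by ring] at hB
  have hsa : (0:ℝ) < a₀ + a₁ := by linarith
  have hsb : (0:ℝ) < b₀ + b₁ := by linarith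
  have hsc : (0:ℝ) < (b₀ - m) + (b₁ - m) := by linarith
  have htri : d * |a₀*b₁ - a₁*b₀| / ((a₀+a₁)*(b₀+b₁))
      ≤ d * |a₀*(b₁-m) - a₁*(b₀-m)| / ((a₀+a₁)*((b₀-m)+(b₁-m)))
        + d * (m * |(b₀-m) - (b₁-m)|) / (((b₀-m)+(b₁-m))*(b₀+b₁)) := by
    have hid : (a₀*b₁ - a₁*b₀) * ((b₀-m)+(b₁-m))
        = (a₀*(b₁-m) - a₁*(b₀-m)) * (b₀+b₁) + (m * ((b₀-m) - (b₁-m))) * (a₀+a₁) := by ring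
    have habs : |a₀*b₁ - a₁*b₀| * ((b₀-m)+(b₁-m))
        ≤ |a₀*(b₁-m) - a₁*(b₀-m)| * (b₀+b₁) + (m * |(b₀-m) - (b₁-m)|) * (a₀+a₁) := by
      calc |a₀*b₁ - a₁*b₀| * ((b₀-m)+(b₁-m))
          = |(a₀*b₁ - a₁*b₀) * ((b₀-m)+(b₁-m))| := by
            rw [abs_mul, abs_of_pos hsc]
        _ = |(a₀*(b₁-m) - a₁*(b₀-m)) * (b₀+b₁) + (m * ((b₀-m) - (b₁-m))) * (a₀+a₁)| := by
            rw [hid]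
        _ ≤ |(a₀*(b₁-m) - a₁*(b₀-m)) * (b₀+b₁)| + |(m * ((b₀-m) - (b₁-m))) * (a₀+a₁)| :=
            abs_add_le _ _
        _ = |a₀*(b₁-m) - a₁*(b₀-m)| * (b₀+b₁) + (m * |(b₀-m) - (b₁-m)|) * (a₀+a₁) := by
            rw [abs_mul, abs_of_pos hsb, abs_mul, abs_mul, abs_of_nonneg hm,
              abs_of_pos hsa]
    rw [div_add_div _ _ (by positivity) (by positivity), div_le_div_iff₀ (by positivity) (by positivity)]
    nlinarith [mul_le_mul_of_nonneg_left habs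
      (mul_nonneg hd (by positivity : (0:ℝ) ≤ (a₀+a₁)*(b₀+b₁)*(((b₀-m)+(b₁-m)))))]
  linarith [hA, hB, htri]

/-- Concentric case of the spacing lemma: for nested concentric pairs
X_i ⊆ Y_i of properly overlapping disks, the midpoint disks satisfy
n(X_{1/2}, Y_{1/2}) ≥ min{n(X₀,Y₀), n(X₁,Y₁)}. -/
theorem midpoint_nesting_concentric (c₀ c₁ : ℂ) (rX₀ rX₁ rY₀ rY₁ : ℝ)
    (hX₀ : 0 < rX₀) (hX₁ : 0 < rX₁) (hY₀ : 0 < rY₀) (hY₁ : 0 < rY₁)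
    (hoverX : dist c₀ c₁ < rX₀ + rX₁) (hoverY : dist c₀ c₁ < rY₀ + rY₁)
    (hnest₀ : 0 ≤ nest c₀ rX₀ c₀ rY₀) (hnest₁ : 0 ≤ nest c₁ rX₁ c₁ rY₁) :
    min (nest c₀ rX₀ c₀ rY₀) (nest c₁ rX₁ c₁ rY₁) ≤
      nest (midC c₀ c₁ rX₀ rX₁) (midR c₀ c₁ rX₀ rX₁)
        (midC c₀ c₁ rY₀ rY₁) (midR c₀ c₁ rY₀ rY₁) := by
  simp only [nest, dist_self, sub_zero] at hnest₀ hnest₁ ⊢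
  have hd : (0:ℝ) ≤ dist c₀ c₁ := dist_nonneg
  set m := min (rY₀ - rX₀) (rY₁ - rX₁) with hmdef
  have hm : 0 ≤ m := le_min hnest₀ hnest₁
  have hb₀ : rX₀ + m ≤ rY₀ := by
    have := min_le_left (rY₀ - rX₀) (rY₁ - rX₁); rw [← hmdef] at this; linarith
  have hb₁ : rX₁ + m ≤ rY₁ := by
    have := min_le_right (rY₀ - rX₀) (rY₁ - rX₁); rw [← hmdef] at this; linarith
  have hdist : dist (midC c₀ c₁ rX₀ rX₁) (midC c₀ c₁ rY₀ rY₁)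
      = dist c₀ c₁ * |rX₀*rY₁ - rX₁*rY₀| / ((rX₀+rX₁)*(rY₀+rY₁)) := by
    have hX : ((rX₀ : ℂ) + (rX₁ : ℂ)) ≠ 0 := by
      exact_mod_cast ne_of_gt (show (0:ℝ) < rX₀ + rX₁ by linarith)
    have hY : ((rY₀ : ℂ) + (rY₁ : ℂ)) ≠ 0 := by
      exact_mod_cast ne_of_gt (show (0:ℝ) < rY₀ + rY₁ by linarith)
    have hdiff : midC c₀ c₁ rX₀ rX₁ - midC c₀ c₁ rY₀ rY₁
        = (c₁ - c₀) * ((((rX₀*rY₁ - rX₁*rY₀)/((rX₀+rX₁)*(rY₀+rY₁))) : ℝ) : ℂ) := by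
      simp only [midC]
      push_cast
      field_simp
      ring
    rw [Complex.dist_eq, hdiff, norm_mul, Complex.norm_real, Real.norm_eq_abs, abs_div,
      abs_of_pos (show (0:ℝ) < (rX₀+rX₁)*(rY₀+rY₁) by positivity),
      ← Complex.dist_eq, dist_comm c₁ c₀]
    ring
  have hmain := master (dist c₀ c₁) rX₀ rX₁ rY₀ rY₁ m hX₀ hX₁ hd hm hb₀ hb₁ hoverX
  simp only [midR]
  rw [hdist]
  linarith [hmain]
end

section
/- Let X₀, X₁ be properly overlapping disks and let H_i = {z ∈ ℂ : ⟨z, (cos θ_i, sin θ_i)⟩ ≥ ρ_i} be half-planes with X_i ⊆ H_i and the boundary line of H_i tangent to X_i, for i = 0,1. If θ₀ ≠ −θ₁ (mod 2π), then the midpoint disk X_{1/2} is contained in the intermediate half-plane ((θ₀+θ₁)/2, (ρ₀+ρ₁)/(2cos((θ₀−θ₁)/2))), where representatives of θ₀, θ₁ are chosen to differ by less than π. -/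
open Complex

set_option maxHeartbeats 1600000 in
/-- Proposition (venn): if each disk X_i of a properly overlapping pair lies in
a half-plane H_i = {z : Re(z·e^{-iθ_i}) ≥ ρ_i} with tangent boundary line, and
the representatives satisfy |θ₀ − θ₁| < π (admissibility), then the midpoint
disk X_{1/2} lies in the intermediate half-plane
((θ₀+θ₁)/2, (ρ₀+ρ₁)/(2cos((θ₀−θ₁)/2))). -/
theorem midpoint_disk_in_intermediate_halfplane (c₀ c₁ : ℂ) (r₀ r₁ : ℝ)
    (θ₀ θ₁ ρ₀ ρ₁ : ℝ)
    (h₀ : 0 < r₀) (h₁ : 0 < r₁) (hover : dist c₀ c₁ < r₀ + r₁)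
    (hadm : |θ₀ - θ₁| < Real.pi)
    (htan₀ : (c₀ * Complex.exp (-(θ₀ : ℂ) * Complex.I)).re = ρ₀ + r₀)
    (htan₁ : (c₁ * Complex.exp (-(θ₁ : ℂ) * Complex.I)).re = ρ₁ + r₁) :
    ∀ z ∈ Metric.closedBall (midC c₀ c₁ r₀ r₁) (midR c₀ c₁ r₀ r₁),
      (ρ₀ + ρ₁) / (2 * Real.cos ((θ₀ - θ₁) / 2)) ≤
        (z * Complex.exp (-((((θ₀ + θ₁) / 2 : ℝ)) : ℂ) * Complex.I)).re := by
  intro z hz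
  set u₀ := Complex.exp (-(θ₀ : ℂ) * Complex.I) with hu₀
  set u₁ := Complex.exp (-(θ₁ : ℂ) * Complex.I) with hu₁
  set v := Complex.exp (-((((θ₀ + θ₁) / 2 : ℝ)) : ℂ) * Complex.I) with hv
  set c := Real.cos ((θ₀ - θ₁) / 2) with hcdef
  set s := r₀ + r₁ with hsdef
  set d := dist c₀ c₁ with hddef
  have hs : 0 < s := by positivity
  have hd0 : 0 ≤ d := dist_nonneg
  have hc : 0 < c := by
    apply Real.cos_pos_of_mem_Ioo
    have := abs_lt.mp hadm
    constructor <;> [linarith [this.1]; linarith [this.2]]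
  have hc1 : c ≤ 1 := Real.cos_le_one _
  have hsum : u₀ + u₁ = 2 * (c : ℂ) * v := by
    have e0 : -(θ₀ : ℂ) * Complex.I
        = -((((θ₀ + θ₁) / 2 : ℝ)) : ℂ) * Complex.I + -(((θ₀ - θ₁) / 2 : ℝ) : ℂ) * Complex.I := by
      push_cast; ring
    have e1 : -(θ₁ : ℂ) * Complex.I
        = -((((θ₀ + θ₁) / 2 : ℝ)) : ℂ) * Complex.I + (((θ₀ - θ₁) / 2 : ℝ) : ℂ) * Complex.I := by
      push_cast; ring
    rw [hu₀, hu₁, hv, e0, e1, Complex.exp_add, Complex.exp_add]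
    have h2c : Complex.exp (-(((θ₀ - θ₁) / 2 : ℝ) : ℂ) * Complex.I)
        + Complex.exp ((((θ₀ - θ₁) / 2 : ℝ) : ℂ) * Complex.I)
        = 2 * Complex.cos (((θ₀ - θ₁) / 2 : ℝ) : ℂ) := by
      rw [Complex.cos]; ring
    calc _ = Complex.exp (-((((θ₀ + θ₁) / 2 : ℝ)) : ℂ) * Complex.I) *
          (Complex.exp (-(((θ₀ - θ₁) / 2 : ℝ) : ℂ) * Complex.I)
            + Complex.exp ((((θ₀ - θ₁) / 2 : ℝ) : ℂ) * Complex.I)) := by ring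
      _ = _ := by rw [h2c, ← Complex.ofReal_cos]; ring
  have habs : ∀ θ : ℝ, ‖Complex.exp (-(θ : ℂ) * Complex.I)‖ = 1 := by
    intro θ
    have h : -(θ : ℂ) * Complex.I = ((-θ : ℝ) : ℂ) * Complex.I := by push_cast; ring
    rw [h, Complex.norm_exp_ofReal_mul_I]
  set m := midC c₀ c₁ r₀ r₁ with hm
  set R := midR c₀ c₁ r₀ r₁ with hR
  set g := Real.sqrt (r₀ * r₁) with hg
  set e := Real.sqrt (s ^ 2 - d ^ 2) with he
  have hRval : R * s = g * e := by
    have : R = g * e / s := rfl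
    rw [this, div_mul_cancel₀]
    exact hs.ne'
  have hg2 : g ^ 2 = r₀ * r₁ := Real.sq_sqrt (by positivity)
  have he2 : e ^ 2 = s ^ 2 - d ^ 2 := Real.sq_sqrt (by nlinarith)
  have hg0 : 0 ≤ g := Real.sqrt_nonneg _
  have he0 : 0 ≤ e := Real.sqrt_nonneg _
  -- representation of the center
  have hmrep : (s : ℂ) * m = c₁ * (r₀ : ℂ) + c₀ * (r₁ : ℂ) := by
    have hsne : (r₀ : ℂ) + (r₁ : ℂ) ≠ 0 := by
      have h' : ((r₀ + r₁ : ℝ) : ℂ) ≠ 0 := by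
        exact_mod_cast (by positivity : (0:ℝ) < r₀ + r₁).ne'
      push_cast at h'
      exact h'
    rw [hm, midC, hsdef]
    push_cast
    rw [mul_comm, div_mul_cancel₀ _ hsne]
  set T := ((c₀ - c₁) * ((r₁ : ℂ) * u₁ - (r₀ : ℂ) * u₀)).re with hT
  -- key identity
  have hkey : s * ((m * (u₀ + u₁)).re) = s * (ρ₀ + ρ₁) + s ^ 2 + T := by
    have h1 : s * ((m * (u₀ + u₁)).re) = (((s : ℂ) * m) * (u₀ + u₁)).re := by
      rw [mul_assoc, Complex.re_ofReal_mul]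
    rw [h1, hmrep]
    have expand : ((c₁ * (r₀:ℂ) + c₀ * (r₁:ℂ)) * (u₀ + u₁)).re
        = r₀ * (c₁ * u₀).re + r₁ * (c₀ * u₀).re + r₀ * (c₁ * u₁).re + r₁ * (c₀ * u₁).re := by
      have h2 : (c₁ * (r₀:ℂ) + c₀ * (r₁:ℂ)) * (u₀ + u₁)
          = (r₀:ℂ) * (c₁ * u₀) + (r₁:ℂ) * (c₀ * u₀) + (r₀:ℂ) * (c₁ * u₁) + (r₁:ℂ) * (c₀ * u₁) := by
        ring
      rw [h2]
      simp [Complex.add_re, Complex.re_ofReal_mul]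
    have expandT : T = r₁ * (c₀ * u₁).re - r₀ * (c₀ * u₀).re
        - r₁ * (c₁ * u₁).re + r₀ * (c₁ * u₀).re := by
      have h3 : (c₀ - c₁) * ((r₁ : ℂ) * u₁ - (r₀ : ℂ) * u₀)
          = (r₁:ℂ) * (c₀ * u₁) - (r₀:ℂ) * (c₀ * u₀) - (r₁:ℂ) * (c₁ * u₁) + (r₀:ℂ) * (c₁ * u₀) := by
        ring
      rw [hT, h3]
      simp [Complex.add_re, Complex.sub_re, Complex.re_ofReal_mul]
    rw [expand, expandT, hsdef]
    linear_combination (r₀ + r₁) * htan₀ + (r₀ + r₁) * htan₁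
  -- lower bound on T
  set q := Real.sqrt (s ^ 2 - 4 * (r₀ * r₁) * c ^ 2) with hq
  have hq0 : 0 ≤ q := Real.sqrt_nonneg _
  have hcos2 : (u₁ * (starRingEnd ℂ) u₀).re = 2 * c ^ 2 - 1 := by
    have hconj : (starRingEnd ℂ) u₀ = Complex.exp ((θ₀ : ℂ) * Complex.I) := by
      rw [hu₀, ← Complex.exp_conj]
      congr 1
      simp [Complex.conj_I]
    rw [hconj, hu₁, ← Complex.exp_add]
    have h4 : -(θ₁ : ℂ) * Complex.I + (θ₀ : ℂ) * Complex.I = ((θ₀ - θ₁ : ℝ) : ℂ) * Complex.I := by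
      push_cast; ring
    rw [h4, Complex.exp_ofReal_mul_I_re]
    have h5 : θ₀ - θ₁ = 2 * ((θ₀ - θ₁) / 2) := by ring
    rw [h5, Real.cos_two_mul, hcdef]
  have habsT : ‖(r₁ : ℂ) * u₁ - (r₀ : ℂ) * u₀‖ = q := by
    have hnsq : Complex.normSq ((r₁ : ℂ) * u₁ - (r₀ : ℂ) * u₀)
        = s ^ 2 - 4 * (r₀ * r₁) * c ^ 2 := by
      rw [Complex.normSq_sub]
      have a1 : Complex.normSq ((r₁ : ℂ) * u₁) = r₁ ^ 2 := by
        rw [Complex.normSq_mul, Complex.normSq_ofReal, ← Complex.sq_norm, habs θ₁]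
        ring
      have a0 : Complex.normSq ((r₀ : ℂ) * u₀) = r₀ ^ 2 := by
        rw [Complex.normSq_mul, Complex.normSq_ofReal, ← Complex.sq_norm, habs θ₀]
        ring
      have across : (((r₁ : ℂ) * u₁) * (starRingEnd ℂ) ((r₀ : ℂ) * u₀)).re
          = r₀ * r₁ * (2 * c ^ 2 - 1) := by
        have h6 : ((r₁ : ℂ) * u₁) * (starRingEnd ℂ) ((r₀ : ℂ) * u₀)
            = ((r₀ * r₁ : ℝ) : ℂ) * (u₁ * (starRingEnd ℂ) u₀) := by
          simp only [map_mul, Complex.conj_ofReal]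
          push_cast
          ring
        rw [h6, Complex.re_ofReal_mul, hcos2]
      rw [a1, a0, across, hsdef]
      ring
    rw [Complex.norm_def, hnsq]
  have hTlb : -(d * q) ≤ T := by
    have h7 : (-((c₀ - c₁) * ((r₁ : ℂ) * u₁ - (r₀ : ℂ) * u₀))).re
        ≤ ‖-((c₀ - c₁) * ((r₁ : ℂ) * u₁ - (r₀ : ℂ) * u₀))‖ :=
      Complex.re_le_norm _
    rw [Complex.neg_re, norm_neg, norm_mul, habsT, ← Complex.dist_eq, ← hddef] at h7
    rw [hT]
    linarith
  -- facts about q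
  have hp : 4 * (r₀ * r₁) * c ^ 2 ≤ s ^ 2 := by nlinarith [sq_nonneg (r₀ - r₁), mul_pos h₀ h₁, mul_nonneg (sub_nonneg.mpr hc1) (by linarith : (0:ℝ) ≤ 1 + c)]
  have hq2 : q ^ 2 = s ^ 2 - 4 * (r₀ * r₁) * c ^ 2 := Real.sq_sqrt (by linarith)
  have hqs : q ≤ s := by
    have h4r : 0 ≤ 4 * (r₀ * r₁) * c ^ 2 := by positivity
    have hmono := Real.sqrt_le_sqrt (show s ^ 2 - 4 * (r₀ * r₁) * c ^ 2 ≤ s ^ 2 by linarith)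
    rwa [Real.sqrt_sq hs.le] at hmono
  -- the core inequality
  have hDnn : 0 ≤ s ^ 2 - d * q := by
    have hds : d * q ≤ s * s := mul_le_mul hover.le hqs hq0 hs.le
    have hss : s * s = s ^ 2 := (sq s).symm
    linarith
  have hA : (2 * c * (g * e)) ^ 2 = (s ^ 2 - q ^ 2) * (s ^ 2 - d ^ 2) := by
    rw [mul_pow, mul_pow, mul_pow, hg2, he2, hq2]
    ring
  have hsq : (2 * c * (g * e)) ^ 2 ≤ (s ^ 2 - d * q) ^ 2 := by
    rw [hA]
    nlinarith [sq_nonneg (s * q - s * d)]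
  have hD : 2 * c * (g * e) ≤ s ^ 2 - d * q := by
    have h8 := Real.sqrt_le_sqrt hsq
    rwa [Real.sqrt_sq (by positivity), Real.sqrt_sq hDnn] at h8
  -- the displacement bound
  have hA' : ((m - z) * (u₀ + u₁)).re ≤ R * (2 * c) := by
    have h9 : ((m - z) * (u₀ + u₁)).re ≤ ‖(m - z) * (u₀ + u₁)‖ :=
      Complex.re_le_norm _
    have h10 : ‖(m - z) * (u₀ + u₁)‖ = ‖m - z‖ * (2 * c) := by
      rw [norm_mul, hsum, norm_mul, norm_mul]
      have : ‖((c : ℂ))‖ = c := by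
        rw [Complex.norm_real, Real.norm_eq_abs, abs_of_pos hc]
      rw [this, hv, habs ((θ₀ + θ₁) / 2)]
      simp

    have h11 : ‖m - z‖ ≤ R := by
      rw [← Complex.dist_eq, dist_comm]
      exact Metric.mem_closedBall.mp hz
    calc ((m - z) * (u₀ + u₁)).re ≤ ‖m - z‖ * (2 * c) := by rw [← h10]; exact h9
      _ ≤ R * (2 * c) := by
          apply mul_le_mul_of_nonneg_right h11
          positivity
  have hA2 : s * (((m - z) * (u₀ + u₁)).re) ≤ 2 * c * (g * e) := by
    have h12 := mul_le_mul_of_nonneg_left hA' hs.le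
    have h13 : s * (R * (2 * c)) = 2 * c * (g * e) := by rw [← hRval]; ring
    linarith
  -- assemble
  have hid : s * ((z * (u₀ + u₁)).re)
      = s * ((m * (u₀ + u₁)).re) - s * (((m - z) * (u₀ + u₁)).re) := by
    have h14 : (z * (u₀ + u₁)).re = (m * (u₀ + u₁)).re - ((m - z) * (u₀ + u₁)).re := by
      rw [sub_mul, Complex.sub_re]
      ring
    rw [h14]
    ring
  have hfin : s * (ρ₀ + ρ₁) ≤ s * ((z * (u₀ + u₁)).re) := by linarith
  have hzu : ρ₀ + ρ₁ ≤ (z * (u₀ + u₁)).re := le_of_mul_le_mul_left hfin hs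
  rw [div_le_iff₀ (by positivity : (0:ℝ) < 2 * c)]
  have hzv : (z * v).re * (2 * c) = (z * (u₀ + u₁)).re := by
    rw [hsum]
    have h15 : z * (2 * (c : ℂ) * v) = (((2 * c : ℝ)) : ℂ) * (z * v) := by
      push_cast; ring
    rw [h15, Complex.re_ofReal_mul]
    ring
  rw [hzv]
  exact hzu
end

section
/- Let X₀, X₁ be properly overlapping disks and Y₀, Y₁ properly overlapping disks in ℂ, such that the (Euclidean) distance between X_i and Y_i is at least ε_i > 0 for i = 0,1. Then the distance between the midpoint disks X_{1/2} and Y_{1/2} is at least (ε₀ + ε₁)/2; in particular X_{1/2} and Y_{1/2} are disjoint. -/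
/-- Real inner product on ℂ. -/
noncomputable def ip (x y : ℂ) : ℝ := x.re * y.re + x.im * y.im

lemma ip_self (x : ℂ) : ip x x = ‖x‖ ^ 2 := by
  rw [Complex.sq_norm, Complex.normSq_apply]; rfl

lemma ip_le (x y : ℂ) : ip x y ≤ ‖x‖ * ‖y‖ := by
  have hx : ‖x‖ ^ 2 = x.re ^ 2 + x.im ^ 2 := by
    rw [Complex.sq_norm, Complex.normSq_apply]; ring
  have hy : ‖y‖ ^ 2 = y.re ^ 2 + y.im ^ 2 := by
    rw [Complex.sq_norm, Complex.normSq_apply]; ring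
  have hA := norm_nonneg x
  have hB := norm_nonneg y
  simp only [ip]
  nlinarith [hx, hy, mul_nonneg hA hB, sq_nonneg (x.re * y.im - x.im * y.re)]

lemma ip_sub_right (x y z : ℂ) : ip x (y - z) = ip x y - ip x z := by
  simp [ip, Complex.sub_re, Complex.sub_im]; ring

lemma ip_neg_left (x y : ℂ) : ip (-x) y = - ip x y := by
  simp [ip]; ring

lemma ip_add_left (x y z : ℂ) : ip (x + y) z = ip x z + ip y z := by
  simp [ip, Complex.add_re, Complex.add_im]; ring

lemma ip_real_mul (r : ℝ) (x y : ℂ) : ip ((r : ℂ) * x) y = r * ip x y := by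
  simp [ip, Complex.mul_re, Complex.mul_im]; ring

lemma ip_real_mul_right (r : ℝ) (x y : ℂ) : ip x ((r : ℂ) * y) = r * ip x y := by
  simp [ip, Complex.mul_re, Complex.mul_im]; ring

lemma cs_aux (N d B e S : ℝ) (hN0 : 0 ≤ N) (hd0 : 0 ≤ d) (hB0 : 0 ≤ B)
    (he0 : 0 ≤ e) (hS : 0 < S) (hde : d ^ 2 + e ^ 2 = S ^ 2)
    (hnorm : N ^ 2 + B ^ 2 ≤ S ^ 2) : N * d + B * e ≤ S ^ 2 := by
  nlinarith [sq_nonneg (N * e - B * d), mul_nonneg hN0 hd0, mul_nonneg hB0 he0,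
    mul_pos hS hS, sq_nonneg (N * d + B * e - S ^ 2)]

/-- KEY lemma: for vectors of norm at most 1, the midpoint disk's support value
in direction u₀+u₁ dominates the sum of the two disks' support values. -/
lemma key (u₀ u₁ a₀ a₁ : ℂ) (s₀ s₁ : ℝ) (hs₀ : 0 < s₀) (hs₁ : 0 < s₁)
    (hu₀ : ‖u₀‖ ≤ 1) (hu₁ : ‖u₁‖ ≤ 1)
    (hover : dist a₀ a₁ < s₀ + s₁) :
    ip u₀ a₀ + ip u₁ a₁ - s₀ - s₁ ≤
      ip (u₀ + u₁) (midC a₀ a₁ s₀ s₁)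
        - ‖u₀ + u₁‖ * midR a₀ a₁ s₀ s₁ := by
  have hS : (0:ℝ) < s₀ + s₁ := by linarith
  set S := s₀ + s₁ with hSdef
  set d := dist a₀ a₁ with hddef
  have hd0 : 0 ≤ d := dist_nonneg
  have hdS : d < S := hover
  set e := Real.sqrt (S ^ 2 - d ^ 2) with hedef
  have he0 : 0 ≤ e := Real.sqrt_nonneg _
  have he2 : e ^ 2 = S ^ 2 - d ^ 2 := Real.sq_sqrt (by nlinarith)
  set g := Real.sqrt (s₀ * s₁) with hgdef
  have hg0 : 0 ≤ g := Real.sqrt_nonneg _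
  have hg2 : g ^ 2 = s₀ * s₁ := Real.sq_sqrt (by positivity)
  set N := ‖(s₀ : ℂ) * u₀ - (s₁ : ℂ) * u₁‖ with hNdef
  set K := ‖u₀ + u₁‖ with hKdef
  have hN0 : 0 ≤ N := norm_nonneg _
  have hK0 : 0 ≤ K := norm_nonneg _
  -- the norm bound N² + s₀s₁K² ≤ S²
  have hA : u₀.re ^ 2 + u₀.im ^ 2 ≤ 1 := by
    have h1 : ‖u₀‖ ^ 2 ≤ 1 := by nlinarith [norm_nonneg u₀]
    rw [Complex.sq_norm, Complex.normSq_apply] at h1; nlinarith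
  have hB : u₁.re ^ 2 + u₁.im ^ 2 ≤ 1 := by
    have h1 : ‖u₁‖ ^ 2 ≤ 1 := by nlinarith [norm_nonneg u₁]
    rw [Complex.sq_norm, Complex.normSq_apply] at h1; nlinarith
  have hN2 : N ^ 2 = (s₀ * u₀.re - s₁ * u₁.re) ^ 2 + (s₀ * u₀.im - s₁ * u₁.im) ^ 2 := by
    rw [hNdef, Complex.sq_norm, Complex.normSq_apply]
    simp [Complex.sub_re, Complex.sub_im, Complex.mul_re, Complex.mul_im]
    ring
  have hK2 : K ^ 2 = (u₀.re + u₁.re) ^ 2 + (u₀.im + u₁.im) ^ 2 := by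
    rw [hKdef, Complex.sq_norm, Complex.normSq_apply]
    simp [Complex.add_re, Complex.add_im]
    ring
  have hnorm : N ^ 2 + (g * K) ^ 2 ≤ S ^ 2 := by
    have : (g * K) ^ 2 = (s₀ * s₁) * K ^ 2 := by rw [mul_pow, hg2]
    rw [this, hN2, hK2, hSdef]
    calc (s₀ * u₀.re - s₁ * u₁.re) ^ 2 + (s₀ * u₀.im - s₁ * u₁.im) ^ 2
          + s₀ * s₁ * ((u₀.re + u₁.re) ^ 2 + (u₀.im + u₁.im) ^ 2)
        = s₀ * (s₀ + s₁) * (u₀.re ^ 2 + u₀.im ^ 2)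
          + s₁ * (s₀ + s₁) * (u₁.re ^ 2 + u₁.im ^ 2) := by ring
      _ ≤ s₀ * (s₀ + s₁) * 1 + s₁ * (s₀ + s₁) * 1 := by
          have c₀ : (0:ℝ) ≤ s₀ * (s₀ + s₁) := by positivity
          have c₁ : (0:ℝ) ≤ s₁ * (s₀ + s₁) := by positivity
          exact add_le_add (mul_le_mul_of_nonneg_left hA c₀)
            (mul_le_mul_of_nonneg_left hB c₁)
      _ = (s₀ + s₁) ^ 2 := by ring
  -- the core scalar inequality
  have hde : d ^ 2 + e ^ 2 = S ^ 2 := by rw [he2]; ring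
  have hcore : N * d + (g * K) * e ≤ S ^ 2 :=
    cs_aux N d (g * K) e S hN0 hd0 (mul_nonneg hg0 hK0) he0 hS hde hnorm
  -- rewrite midpoint center differences
  have hSne : ((S : ℝ) : ℂ) ≠ 0 := by
    exact_mod_cast Complex.ofReal_ne_zero.mpr hS.ne'
  have hM0 : a₀ - midC a₀ a₁ s₀ s₁ = ((s₀ / S : ℝ) : ℂ) * (a₀ - a₁) := by
    rw [midC, hSdef]
    have h2 : ((s₀:ℝ) + s₁ : ℂ) ≠ 0 := by
      exact_mod_cast Complex.ofReal_ne_zero.mpr hS.ne'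
    push_cast
    field_simp
    ring
  have hM1 : a₁ - midC a₀ a₁ s₀ s₁ = ((s₁ / S : ℝ) : ℂ) * (a₁ - a₀) := by
    rw [midC, hSdef]
    have h2 : ((s₀:ℝ) + s₁ : ℂ) ≠ 0 := by
      exact_mod_cast Complex.ofReal_ne_zero.mpr hS.ne'
    push_cast
    field_simp
    ring
  have hipbound : ip u₀ (a₀ - midC a₀ a₁ s₀ s₁) + ip u₁ (a₁ - midC a₀ a₁ s₀ s₁)
      ≤ N * d / S := by
    rw [hM0, hM1, ip_real_mul_right, ip_real_mul_right]
    have hcomb : s₀ / S * ip u₀ (a₀ - a₁) + s₁ / S * ip u₁ (a₁ - a₀)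
        = (ip ((s₀ : ℂ) * u₀ - (s₁ : ℂ) * u₁) (a₀ - a₁)) / S := by
      simp only [ip, Complex.sub_re, Complex.sub_im, Complex.mul_re, Complex.mul_im,
        Complex.ofReal_re, Complex.ofReal_im]
      field_simp
      ring
    rw [hcomb]
    have h1 : ip ((s₀ : ℂ) * u₀ - (s₁ : ℂ) * u₁) (a₀ - a₁) ≤ N * d := by
      have h2 := ip_le ((s₀ : ℂ) * u₀ - (s₁ : ℂ) * u₁) (a₀ - a₁)
      rwa [← hNdef, ← Complex.dist_eq, ← hddef] at h2
    gcongr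
  have hmidR : midR a₀ a₁ s₀ s₁ = g * e / S := by
    rw [midR, ← hSdef, ← hddef, ← hgdef, ← hedef]
  -- assemble
  have hsplit : ip u₀ a₀ + ip u₁ a₁ - ip (u₀ + u₁) (midC a₀ a₁ s₀ s₁)
      = ip u₀ (a₀ - midC a₀ a₁ s₀ s₁) + ip u₁ (a₁ - midC a₀ a₁ s₀ s₁) := by
    rw [ip_add_left, ip_sub_right, ip_sub_right]; ring
  have hKR : K * midR a₀ a₁ s₀ s₁ = (g * K) * e / S := by rw [hmidR]; ring
  have hfin : ip u₀ a₀ + ip u₁ a₁ - ip (u₀ + u₁) (midC a₀ a₁ s₀ s₁)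
      + K * midR a₀ a₁ s₀ s₁ ≤ S := by
    rw [hsplit, hKR]
    calc ip u₀ (a₀ - midC a₀ a₁ s₀ s₁) + ip u₁ (a₁ - midC a₀ a₁ s₀ s₁) + (g * K) * e / S
        ≤ N * d / S + (g * K) * e / S := by linarith
      _ = (N * d + (g * K) * e) / S := by ring
      _ ≤ S ^ 2 / S := by gcongr
      _ = S := by rw [sq, mul_div_assoc, div_self hS.ne', mul_one]
  linarith

/-- Corollary (halfvenn): if X₀, X₁ properly overlap, Y₀, Y₁ properly overlap,
and the distance between X_i and Y_i is at least ε_i > 0 for i = 0,1, then the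
distance between the midpoint disks X_{1/2} and Y_{1/2} is at least
(ε₀+ε₁)/2; in particular they are disjoint. -/
theorem midpoint_disks_separated (a₀ a₁ b₀ b₁ : ℂ) (s₀ s₁ t₀ t₁ ε₀ ε₁ : ℝ)
    (hs₀ : 0 < s₀) (hs₁ : 0 < s₁) (ht₀ : 0 < t₀) (ht₁ : 0 < t₁)
    (hε₀ : 0 < ε₀) (hε₁ : 0 < ε₁)
    (hoverX : dist a₀ a₁ < s₀ + s₁) (hoverY : dist b₀ b₁ < t₀ + t₁)
    (hsep₀ : ε₀ ≤ dist a₀ b₀ - s₀ - t₀) (hsep₁ : ε₁ ≤ dist a₁ b₁ - s₁ - t₁) :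
    (ε₀ + ε₁) / 2 ≤
        dist (midC a₀ a₁ s₀ s₁) (midC b₀ b₁ t₀ t₁) -
          midR a₀ a₁ s₀ s₁ - midR b₀ b₁ t₀ t₁ ∧
      Disjoint (Metric.closedBall (midC a₀ a₁ s₀ s₁) (midR a₀ a₁ s₀ s₁))
        (Metric.closedBall (midC b₀ b₁ t₀ t₁) (midR b₀ b₁ t₀ t₁)) := by
  have hD₀pos : (0:ℝ) < dist a₀ b₀ := by linarith
  have hD₁pos : (0:ℝ) < dist a₁ b₁ := by linarith
  set D₀ := dist a₀ b₀ with hD₀def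
  set D₁ := dist a₁ b₁ with hD₁def
  set u₀ : ℂ := ((D₀⁻¹ : ℝ) : ℂ) * (a₀ - b₀) with hu₀def
  set u₁ : ℂ := ((D₁⁻¹ : ℝ) : ℂ) * (a₁ - b₁) with hu₁def
  have habs₀ : ‖a₀ - b₀‖ = D₀ := (Complex.dist_eq a₀ b₀).symm
  have habs₁ : ‖a₁ - b₁‖ = D₁ := (Complex.dist_eq a₁ b₁).symm
  have hu₀abs : ‖u₀‖ = 1 := by
    rw [hu₀def, norm_mul, Complex.norm_real, Real.norm_eq_abs, habs₀, abs_inv, abs_of_pos hD₀pos]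
    field_simp
  have hu₁abs : ‖u₁‖ = 1 := by
    rw [hu₁def, norm_mul, Complex.norm_real, Real.norm_eq_abs, habs₁, abs_inv, abs_of_pos hD₁pos]
    field_simp
  have hw₀ : ip u₀ a₀ - ip u₀ b₀ = D₀ := by
    rw [← ip_sub_right, hu₀def, ip_real_mul, ip_self, habs₀]
    field_simp
  have hw₁ : ip u₁ a₁ - ip u₁ b₁ = D₁ := by
    rw [← ip_sub_right, hu₁def, ip_real_mul, ip_self, habs₁]
    field_simp
  have keyX := key u₀ u₁ a₀ a₁ s₀ s₁ hs₀ hs₁ hu₀abs.le hu₁abs.le hoverX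
  have keyY := key (-u₀) (-u₁) b₀ b₁ t₀ t₁ ht₀ ht₁
    (by rw [norm_neg]; exact hu₀abs.le)
    (by rw [norm_neg]; exact hu₁abs.le) hoverY
  have hneg : (-u₀) + (-u₁) = -(u₀ + u₁) := by ring
  rw [hneg, norm_neg, ip_neg_left, ip_neg_left, ip_neg_left] at keyY
  set K := ‖u₀ + u₁‖ with hKdef
  have hK0 : 0 ≤ K := norm_nonneg _
  have hK2 : K ≤ 2 := by
    calc K ≤ ‖u₀‖ + ‖u₁‖ := norm_add_le u₀ u₁
      _ = 2 := by rw [hu₀abs, hu₁abs]; norm_num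
  have hCS : ip (u₀ + u₁) (midC a₀ a₁ s₀ s₁) - ip (u₀ + u₁) (midC b₀ b₁ t₀ t₁)
      ≤ K * dist (midC a₀ a₁ s₀ s₁) (midC b₀ b₁ t₀ t₁) := by
    rw [← ip_sub_right, Complex.dist_eq]
    exact ip_le _ _
  set Q := dist (midC a₀ a₁ s₀ s₁) (midC b₀ b₁ t₀ t₁) -
    midR a₀ a₁ s₀ s₁ - midR b₀ b₁ t₀ t₁ with hQdef
  have hchain : ε₀ + ε₁ ≤ K * Q := by
    have hexp : K * Q = K * dist (midC a₀ a₁ s₀ s₁) (midC b₀ b₁ t₀ t₁)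
        - K * midR a₀ a₁ s₀ s₁ - K * midR b₀ b₁ t₀ t₁ := by rw [hQdef]; ring
    rw [hexp]
    linarith [keyX, keyY, hCS, hw₀, hw₁, hsep₀, hsep₁]
  have hQpos : 0 < Q := by nlinarith
  have hhalf : (ε₀ + ε₁) / 2 ≤ Q := by nlinarith
  refine ⟨hhalf, Metric.closedBall_disjoint_closedBall ?_⟩
  have hRX0 : 0 ≤ midR a₀ a₁ s₀ s₁ := by rw [midR]; positivity
  have hRY0 : 0 ≤ midR b₀ b₁ t₀ t₁ := by rw [midR]; positivity
  rw [hQdef] at hhalf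
  linarith
end

section
/- The path of disks h_t satisfies the halving property: h(c₀,r₀,c_{1/2},r_{1/2}, 2t) = h(c₀,r₀,c₁,r₁, t) for t ∈ [0, 1/2], where (c_{1/2}, r_{1/2}) = h(c₀,r₀,c₁,r₁, 1/2) and the angle of the pair (c₀,r₀),(c_{1/2},r_{1/2}) equals θ/2. -/
/-- The angle of a pair of properly overlapping disks:
θ = arccos((r₀² + r₁² − |c₀−c₁|²)/(2r₀r₁)). -/
noncomputable def diskAngle (c₀ c₁ : ℂ) (r₀ r₁ : ℝ) : ℝ :=
  Real.arccos ((r₀ ^ 2 + r₁ ^ 2 - dist c₀ c₁ ^ 2) / (2 * r₀ * r₁))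

/-- The center at time t of the disk homotopy h(c₀,r₀,c₁,r₁,t). -/
noncomputable def hC (c₀ c₁ : ℂ) (r₀ r₁ t : ℝ) : ℂ :=
  (c₁ * ((r₀ * Real.sin (t * diskAngle c₀ c₁ r₀ r₁) : ℝ) : ℂ) +
      c₀ * ((r₁ * Real.sin ((1 - t) * diskAngle c₀ c₁ r₀ r₁) : ℝ) : ℂ)) /
    (((r₀ * Real.sin (t * diskAngle c₀ c₁ r₀ r₁) +
        r₁ * Real.sin ((1 - t) * diskAngle c₀ c₁ r₀ r₁) : ℝ)) : ℂ)

/-- The radius at time t of the disk homotopy h(c₀,r₀,c₁,r₁,t). -/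
noncomputable def hR (c₀ c₁ : ℂ) (r₀ r₁ t : ℝ) : ℝ :=
  r₀ * r₁ * Real.sin (diskAngle c₀ c₁ r₀ r₁) /
    (r₀ * Real.sin (t * diskAngle c₀ c₁ r₀ r₁) +
      r₁ * Real.sin ((1 - t) * diskAngle c₀ c₁ r₀ r₁))

/-- Halving property of the disk homotopy: with (c_{1/2}, r_{1/2}) =
h(c₀,r₀,c₁,r₁,1/2), the angle of the pair (c₀,r₀),(c_{1/2},r_{1/2}) is θ/2 and
h(c₀,r₀,c_{1/2},r_{1/2},2t) = h(c₀,r₀,c₁,r₁,t) for t ∈ [0,1/2]. -/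
theorem disk_homotopy_halving (c₀ c₁ : ℂ) (r₀ r₁ : ℝ)
    (h₀ : 0 < r₀) (h₁ : 0 < r₁) (hover : dist c₀ c₁ < r₀ + r₁)
    (hθpos : 0 < diskAngle c₀ c₁ r₀ r₁) (hθlt : diskAngle c₀ c₁ r₀ r₁ < Real.pi) :
    diskAngle c₀ (hC c₀ c₁ r₀ r₁ (1 / 2)) r₀ (hR c₀ c₁ r₀ r₁ (1 / 2)) =
        diskAngle c₀ c₁ r₀ r₁ / 2 ∧
      ∀ t ∈ Set.Icc (0 : ℝ) (1 / 2),
        hC c₀ (hC c₀ c₁ r₀ r₁ (1 / 2)) r₀ (hR c₀ c₁ r₀ r₁ (1 / 2)) (2 * t) =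
            hC c₀ c₁ r₀ r₁ t ∧
          hR c₀ (hC c₀ c₁ r₀ r₁ (1 / 2)) r₀ (hR c₀ c₁ r₀ r₁ (1 / 2)) (2 * t) =
            hR c₀ c₁ r₀ r₁ t := by
  set θ := diskAngle c₀ c₁ r₀ r₁ with hθdef
  have hr01 : (0:ℝ) < r₀ + r₁ := by linarith
  have hr01' : (r₀ + r₁ : ℝ) ≠ 0 := ne_of_gt hr01
  have hpi := Real.pi_pos
  have hS : 0 < Real.sin (θ/2) :=
    Real.sin_pos_of_pos_of_lt_pi (by linarith) (by linarith)
  have hCpos : 0 < Real.cos (θ/2) :=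
    Real.cos_pos_of_mem_Ioo ⟨by linarith, by linarith⟩
  set S := Real.sin (θ/2) with hSdef
  set C := Real.cos (θ/2) with hCdef
  -- cos θ identities
  have hcos2 : Real.cos θ = 2*C^2 - 1 := by
    rw [show θ = 2*(θ/2) by ring, Real.cos_two_mul]
  have hsin2 : Real.sin θ = 2*S*C := by
    rw [show θ = 2*(θ/2) by ring, Real.sin_two_mul]
  -- the argument of arccos is in (-1,1)
  set x := (r₀ ^ 2 + r₁ ^ 2 - dist c₀ c₁ ^ 2) / (2 * r₀ * r₁) with hxdef
  have hx1 : x < 1 := Real.arccos_pos.mp hθpos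
  have hx2 : -1 < x := by
    by_contra h
    push_neg at h
    have : θ = Real.pi := Real.arccos_eq_pi.mpr h
    linarith
  have hcosθ : Real.cos θ = x := Real.cos_arccos hx2.le hx1.le
  have hd2 : dist c₀ c₁ ^ 2 = r₀^2 + r₁^2 - 2*r₀*r₁*Real.cos θ := by
    rw [hcosθ, hxdef]
    field_simp
    ring
  -- values at t = 1/2
  have hC_half : hC c₀ c₁ r₀ r₁ (1/2) = ((r₀:ℂ)*c₁ + (r₁:ℂ)*c₀) / ((r₀+r₁ : ℝ) : ℂ) := by
    rw [hC, ← hθdef]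
    have e1 : (1 - 1/2 : ℝ) * θ = θ/2 := by ring
    have e2 : (1/2 : ℝ) * θ = θ/2 := by ring
    rw [e1, e2, ← hSdef]
    have hSne : ((S:ℝ):ℂ) ≠ 0 := by
      exact_mod_cast ne_of_gt hS
    rw [show (c₁ * ((r₀ * S : ℝ) : ℂ) + c₀ * ((r₁ * S : ℝ) : ℂ))
        = ((S:ℝ):ℂ) * ((r₀:ℂ)*c₁ + (r₁:ℂ)*c₀) by push_cast; ring,
      show (((r₀ * S + r₁ * S : ℝ)) : ℂ) = ((S:ℝ):ℂ) * ((r₀+r₁ : ℝ) : ℂ) by push_cast; ring,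
      mul_div_mul_left _ _ hSne]
  have hR_half : hR c₀ c₁ r₀ r₁ (1/2) = 2*r₀*r₁*C/(r₀+r₁) := by
    rw [hR, ← hθdef]
    have e1 : (1 - 1/2 : ℝ) * θ = θ/2 := by ring
    have e2 : (1/2 : ℝ) * θ = θ/2 := by ring
    rw [e1, e2, ← hSdef, hsin2]
    rw [show r₀ * S + r₁ * S = S * (r₀ + r₁) by ring]
    rw [show r₀ * r₁ * (2*S*C) = S * (2*r₀*r₁*C) by ring]
    rw [mul_div_mul_left _ _ (ne_of_gt hS)]
  -- distance to half center
  have hdist : dist c₀ (hC c₀ c₁ r₀ r₁ (1/2)) = (r₀/(r₀+r₁)) * dist c₀ c₁ := by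
    rw [hC_half, Complex.dist_eq, Complex.dist_eq]
    have : c₀ - ((r₀:ℂ)*c₁ + (r₁:ℂ)*c₀)/((r₀+r₁:ℝ):ℂ) = ((r₀/(r₀+r₁) : ℝ) : ℂ) * (c₀ - c₁) := by
      have h01c : (r₀:ℂ) + (r₁:ℂ) ≠ 0 := by exact_mod_cast hr01'
      push_cast
      field_simp
      ring
    rw [this, norm_mul, Complex.norm_real, Real.norm_eq_abs, abs_of_pos (by positivity)]
  -- the halved angle
  have hangle : diskAngle c₀ (hC c₀ c₁ r₀ r₁ (1/2)) r₀ (hR c₀ c₁ r₀ r₁ (1/2)) = θ/2 := by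
    rw [diskAngle, hR_half, hdist]
    have harg : (r₀ ^ 2 + (2*r₀*r₁*C/(r₀+r₁)) ^ 2 - ((r₀/(r₀+r₁)) * dist c₀ c₁) ^ 2) /
        (2 * r₀ * (2*r₀*r₁*C/(r₀+r₁))) = C := by
      rw [mul_pow, hd2, hcos2]
      field_simp
      ring
    rw [harg, hCdef, Real.arccos_cos (by linarith) (by linarith)]
  set c2 := hC c₀ c₁ r₀ r₁ (1/2) with hc2def
  set r2 := hR c₀ c₁ r₀ r₁ (1/2) with hr2def
  refine ⟨hangle, fun t ht => ?_⟩
  -- key trig identity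
  have key : Real.sin (t*θ) + 2*C*Real.sin (θ/2 - t*θ) = Real.sin ((1-t)*θ) := by
    have h1 : Real.sin ((1-t)*θ)
        = Real.sin (2*(θ/2)) * Real.cos (t*θ) - Real.cos (2*(θ/2)) * Real.sin (t*θ) := by
      rw [show (1-t)*θ = 2*(θ/2) - t*θ by ring, Real.sin_sub]
    rw [h1, Real.sin_two_mul, Real.cos_two_mul, Real.sin_sub]
    ring
  set A := Real.sin (t*θ) with hAdef
  set B := Real.sin ((1-t)*θ) with hBdef
  set E := Real.sin (θ/2 - t*θ) with hEdef
  have h2t : 2*t*(θ/2) = t*θ := by ring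
  have h12t : (1-2*t)*(θ/2) = θ/2 - t*θ := by ring
  have hk : ((r₀ : ℂ)/((r₀+r₁:ℝ):ℂ)) ≠ 0 := by
    apply div_ne_zero
    · exact_mod_cast ne_of_gt h₀
    · exact_mod_cast hr01'
  constructor
  · simp only [hC]
    rw [← hθdef, hangle, h2t, h12t, ← hAdef, ← hBdef, ← hEdef, hC_half, hR_half]
    have hkey : (A:ℂ) + 2*(C:ℝ)*(E:ℝ) = (B:ℝ) := by exact_mod_cast key
    have hnum : ((r₀:ℂ)*c₁ + (r₁:ℂ)*c₀)/((r₀+r₁:ℝ):ℂ) * ((r₀ * A : ℝ):ℂ)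
        + c₀ * ((2*r₀*r₁*C/(r₀+r₁) * E : ℝ):ℂ)
        = ((r₀:ℂ)/((r₀+r₁:ℝ):ℂ)) * (c₁ * ((r₀*A : ℝ):ℂ) + c₀ * ((r₁*B : ℝ):ℂ)) := by
      have h01c : (r₀:ℂ) + (r₁:ℂ) ≠ 0 := by exact_mod_cast hr01'
      push_cast
      rw [← hkey]
      field_simp
      ring
    have hden : (((r₀ * A + 2*r₀*r₁*C/(r₀+r₁) * E : ℝ)):ℂ)
        = ((r₀:ℂ)/((r₀+r₁:ℝ):ℂ)) * (((r₀ * A + r₁ * B : ℝ)):ℂ) := by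
      have h01c : (r₀:ℂ) + (r₁:ℂ) ≠ 0 := by exact_mod_cast hr01'
      push_cast
      rw [← hkey]
      field_simp
      ring
    rw [hnum, hden, mul_div_mul_left _ _ hk]
  · simp only [hR]
    rw [← hθdef, hangle, h2t, h12t, ← hAdef, ← hBdef, ← hEdef, ← hSdef, hR_half, hsin2]
    have hden : r₀ * A + 2*r₀*r₁*C/(r₀+r₁) * E = (r₀/(r₀+r₁)) * (r₀ * A + r₁ * B) := by
      rw [← key]
      field_simp
      ring
    have hnum : r₀ * (2*r₀*r₁*C/(r₀+r₁)) * S = (r₀/(r₀+r₁)) * (r₀ * r₁ * (2*S*C)) := by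
      field_simp
    rw [hnum, hden, mul_div_mul_left _ _ (by positivity : (r₀/(r₀+r₁)) ≠ 0)]
end

section
/- Let X₀ ⊆ Y₀ and X₁ ⊆ Y₁ be disks with X₀,X₁ properly overlapping, Y₀,Y₁ properly overlapping, X₀ and Y₀ internally tangent (n(X₀,Y₀) = 0) and X₁ = Y₁. Then the midpoint disks satisfy X_{1/2} ⊆ Y_{1/2}. -/
private lemma sqrt_amgm (x y : ℝ) (hx : 0 ≤ x) (hy : 0 ≤ y) :
    Real.sqrt (x * y) ≤ (x + y) / 2 := by
  have h : x * y ≤ ((x + y) / 2) ^ 2 := by nlinarith [sq_nonneg (x - y)]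
  calc Real.sqrt (x * y) ≤ Real.sqrt (((x + y) / 2) ^ 2) := Real.sqrt_le_sqrt h
    _ = (x + y) / 2 := Real.sqrt_sq (by positivity)

private lemma le_of_sq_le_sq'' (p q : ℝ) (hp : 0 ≤ p) (hq : 0 ≤ q) (h : p ^ 2 ≤ q ^ 2) :
    p ≤ q := by
  calc p = Real.sqrt (p ^ 2) := (Real.sqrt_sq hp).symm
    _ ≤ Real.sqrt (q ^ 2) := Real.sqrt_le_sqrt h
    _ = q := Real.sqrt_sq hq

/-- Abstract core inequality: an AM–GM argument for three square roots. -/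
private lemma midpoint_core (A B r Q S T x y : ℝ) (hA : 0 < A) (hB : 0 < B) (hr : 0 < r)
    (hQ : 0 ≤ Q) (hS : 0 ≤ S) (hT : 0 ≤ T) (hx : 0 ≤ x) (hy : 0 ≤ y)
    (hxy : Q * S = x * y)
    (hiden : A ^ 2 * T = r ^ 2 * Q + r * B * (x + y) + B ^ 2 * S) :
    Real.sqrt S / A + r * Real.sqrt Q / (A * B) ≤ Real.sqrt T / B := by
  have e1 : (r * Real.sqrt Q) ^ 2 = r ^ 2 * Q := by rw [mul_pow, Real.sq_sqrt hQ]
  have e2 : (B * Real.sqrt S) ^ 2 = B ^ 2 * S := by rw [mul_pow, Real.sq_sqrt hS]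
  have e3 : (A * Real.sqrt T) ^ 2 = A ^ 2 * T := by rw [mul_pow, Real.sq_sqrt hT]
  have h3 : Real.sqrt Q * Real.sqrt S ≤ (x + y) / 2 := by
    rw [← Real.sqrt_mul hQ, hxy]
    exact sqrt_amgm x y hx hy
  have h3' : 2 * r * B * (Real.sqrt Q * Real.sqrt S) ≤ 2 * r * B * ((x + y) / 2) :=
    mul_le_mul_of_nonneg_left h3 (by positivity)
  have key : (r * Real.sqrt Q + B * Real.sqrt S) ^ 2 ≤ (A * Real.sqrt T) ^ 2 := by
    nlinarith [e1, e2, e3, h3', hiden]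
  have final : r * Real.sqrt Q + B * Real.sqrt S ≤ A * Real.sqrt T :=
    le_of_sq_le_sq'' _ _ (by positivity) (by positivity) key
  calc Real.sqrt S / A + r * Real.sqrt Q / (A * B)
      = (r * Real.sqrt Q + B * Real.sqrt S) / (A * B) := by field_simp; ring
    _ ≤ (A * Real.sqrt T) / (A * B) := by gcongr
    _ = Real.sqrt T / B := mul_div_mul_left _ _ (ne_of_gt hA)

/-- The purely real-variable inequality behind the midpoint nesting lemma. -/
private lemma midpoint_aux (s t r d e : ℝ) (hs : 0 < s) (ht : 0 < t) (hr : 0 < r)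
    (hts : s < t) (hd0 : 0 ≤ d) (he0 : 0 ≤ e) (hdA : d < s + r) (heB : e < t + r)
    (hδK : 0 ≤ (t - s) * ((s + r) * (t + r) * (t - s) + (t + r) * d ^ 2 - (s + r) * e ^ 2)) :
    Real.sqrt (s * r * ((s + r) ^ 2 - d ^ 2)) / (s + r)
      + r * Real.sqrt ((t - s) * ((s + r) * (t + r) * (t - s) + (t + r) * d ^ 2
          - (s + r) * e ^ 2)) / ((s + r) * (t + r))
      ≤ Real.sqrt (t * r * ((t + r) ^ 2 - e ^ 2)) / (t + r) := by
  have hA : 0 < s + r := by linarith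
  have hB : 0 < t + r := by linarith
  have hδ : 0 < t - s := by linarith
  have hKnn : 0 ≤ (s + r) * (t + r) * (t - s) + (t + r) * d ^ 2 - (s + r) * e ^ 2 := by
    by_contra h
    push_neg at h
    nlinarith
  have hAd : 0 ≤ (s + r) ^ 2 - d ^ 2 := by nlinarith
  have hBe : 0 ≤ (t + r) ^ 2 - e ^ 2 := by nlinarith
  exact midpoint_core (s + r) (t + r) r _ _ _
    (r * (t - s) * ((s + r) ^ 2 - d ^ 2))
    (s * ((s + r) * (t + r) * (t - s) + (t + r) * d ^ 2 - (s + r) * e ^ 2))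
    hA hB hr hδK (by positivity) (by positivity) (by positivity) (by positivity)
    (by ring) (by ring)

/-- Lemma (spacingtang): if X₀ ⊆ Y₀ are internally tangent (n(X₀,Y₀) = 0),
X₁ = Y₁, and the pairs X₀,X₁ and Y₀,Y₁ each properly overlap, then the
midpoint disk X_{1/2} is contained in the midpoint disk Y_{1/2}. -/
theorem midpoint_nesting_tangent (a₀ b₀ c₁ : ℂ) (s₀ t₀ r₁ : ℝ)
    (hs₀ : 0 < s₀) (ht₀ : 0 < t₀) (hr₁ : 0 < r₁)
    (htang : t₀ - s₀ = dist a₀ b₀)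
    (hoverX : dist a₀ c₁ < s₀ + r₁) (hoverY : dist b₀ c₁ < t₀ + r₁) :
    Metric.closedBall (midC a₀ c₁ s₀ r₁) (midR a₀ c₁ s₀ r₁) ⊆
      Metric.closedBall (midC b₀ c₁ t₀ r₁) (midR b₀ c₁ t₀ r₁) := by
  rcases eq_or_ne a₀ b₀ with hab | hab
  · have hst : t₀ = s₀ := by
      have h := htang
      rw [hab, dist_self] at h
      linarith
    subst hab
    rw [hst]
  · have hδpos : 0 < t₀ - s₀ := by rw [htang]; exact dist_pos.mpr hab
    have hApos : 0 < s₀ + r₁ := by positivity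
    have hBpos : 0 < t₀ + r₁ := by positivity
    obtain ⟨u, hu⟩ : ∃ u, u = a₀ - c₁ := ⟨_, rfl⟩
    obtain ⟨v, hv⟩ : ∃ v, v = b₀ - c₁ := ⟨_, rfl⟩
    have hd2 : u.re ^ 2 + u.im ^ 2 = dist a₀ c₁ ^ 2 := by
      rw [hu, Complex.dist_eq, Complex.sq_norm, Complex.normSq_apply]; ring
    have he2 : v.re ^ 2 + v.im ^ 2 = dist b₀ c₁ ^ 2 := by
      rw [hv, Complex.dist_eq, Complex.sq_norm, Complex.normSq_apply]; ring
    have hδ2 : (u.re - v.re) ^ 2 + (u.im - v.im) ^ 2 = (t₀ - s₀) ^ 2 := by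
      have hsub : a₀ - b₀ = u - v := by rw [hu, hv]; ring
      rw [htang, Complex.dist_eq, Complex.sq_norm, Complex.normSq_apply, hsub]
      simp only [Complex.sub_re, Complex.sub_im]
      ring
    have hK : Complex.normSq (((t₀ + r₁ : ℝ) : ℂ) * u - ((s₀ + r₁ : ℝ) : ℂ) * v)
        = (t₀ - s₀) * ((s₀ + r₁) * (t₀ + r₁) * (t₀ - s₀) + (t₀ + r₁) * dist a₀ c₁ ^ 2
            - (s₀ + r₁) * dist b₀ c₁ ^ 2) := by
      rw [Complex.normSq_apply]
      simp only [Complex.sub_re, Complex.sub_im, Complex.mul_re, Complex.mul_im,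
        Complex.ofReal_re, Complex.ofReal_im]
      linear_combination ((s₀ + r₁) * (t₀ + r₁)) * hδ2 + ((t₀ - s₀) * (t₀ + r₁)) * hd2
        - ((t₀ - s₀) * (s₀ + r₁)) * he2
    have hδK : 0 ≤ (t₀ - s₀) * ((s₀ + r₁) * (t₀ + r₁) * (t₀ - s₀)
        + (t₀ + r₁) * dist a₀ c₁ ^ 2 - (s₀ + r₁) * dist b₀ c₁ ^ 2) :=
      hK ▸ Complex.normSq_nonneg _
    have hAne : ((s₀ : ℂ) + (r₁ : ℂ)) ≠ 0 := by
      rw [← Complex.ofReal_add]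
      exact Complex.ofReal_ne_zero.mpr (ne_of_gt hApos)
    have hBne : ((t₀ : ℂ) + (r₁ : ℂ)) ≠ 0 := by
      rw [← Complex.ofReal_add]
      exact Complex.ofReal_ne_zero.mpr (ne_of_gt hBpos)
    have hcent : midC a₀ c₁ s₀ r₁ - midC b₀ c₁ t₀ r₁
        = (r₁ : ℂ) * (((t₀ + r₁ : ℝ) : ℂ) * u - ((s₀ + r₁ : ℝ) : ℂ) * v)
          / (((s₀ + r₁ : ℝ) : ℂ) * ((t₀ + r₁ : ℝ) : ℂ)) := by
      rw [midC, midC, hu, hv]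
      push_cast
      field_simp
      ring
    have hdist : dist (midC a₀ c₁ s₀ r₁) (midC b₀ c₁ t₀ r₁)
        = r₁ * Real.sqrt ((t₀ - s₀) * ((s₀ + r₁) * (t₀ + r₁) * (t₀ - s₀)
            + (t₀ + r₁) * dist a₀ c₁ ^ 2 - (s₀ + r₁) * dist b₀ c₁ ^ 2))
          / ((s₀ + r₁) * (t₀ + r₁)) := by
      rw [Complex.dist_eq, hcent, norm_div, norm_mul, norm_mul, Complex.norm_real,
        Complex.norm_real, Complex.norm_real, Real.norm_eq_abs, Real.norm_eq_abs,
        Real.norm_eq_abs, Complex.norm_def, hK,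
        abs_of_pos hr₁, abs_of_pos hApos, abs_of_pos hBpos]
    apply Metric.closedBall_subset_closedBall'
    rw [hdist, midR, midR,
      ← Real.sqrt_mul (by positivity : (0:ℝ) ≤ s₀ * r₁),
      ← Real.sqrt_mul (by positivity : (0:ℝ) ≤ t₀ * r₁)]
    exact midpoint_aux s₀ t₀ r₁ (dist a₀ c₁) (dist b₀ c₁) hs₀ ht₀ hr₁ (by linarith)
      dist_nonneg dist_nonneg hoverX hoverY hδK
end
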